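/- Let {θ_j}_{j∈J} be a family of functions on ℝⁿ with 0 ≤ θ_j ≤ 1, Lipschitz constant Lip(θ_j) ≤ C₀/δ for a fixed δ > 0, Σ_{j∈J} θ_j ≡ 1 on an open set U, and such that each point of U lies in the support of at most K of the θ_j. Let {p_j}_{j∈J} ⊆ Hom(ℝⁿ, ℝⁿ) be linear maps such that |p_i − p_j| ≤ ν whenever supp θ_i ∩ supp θ_j ∩ U ≠ ∅. Then the map p̃(x) = Σ_j θ_j(x) p_j satisfies: (a) for every x ∈ U and every j₀ with θ_{j₀}(x) ≠ 0, |p̃(x) − p_{j₀}| ≤ ν; and (b) |p̃(y) − p̃(z)| ≤ 2K·C₀·ν·|y − z|/δ for all y, z ∈ U lying in a common ball on which the same at-most-2K indices are active. -/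
import Mathlib

lemma finsum_eq_sum_of_active {J : Type*} {M : Type*} [AddCommMonoid M]
    (g : J → ℝ) (f : J → M) (hf : ∀ j, g j = 0 → f j = 0) (s : Finset J)
    (hs : ∀ j, g j ≠ 0 → j ∈ s) : ∑ᶠ j, f j = ∑ j ∈ s, f j := by
  apply finsum_eq_finset_sum_of_support_subset
  intro j hj
  by_contra h
  exact hj (hf j (by by_contra hg; exact h (hs j hg)))

/-- Gluing nearly-equal linear maps by a Lipschitz partition of unity: the averaged map
`p̃(x) = Σⱼ θⱼ(x) pⱼ` stays `ν`-close to each active `p_{j₀}`, and is Lipschitz with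
constant `2K C₀ ν / δ` on regions where a common family of at most `2K` pairwise
`ν`-close indices is active. -/
theorem partition_of_unity_gluing {n : ℕ} {J : Type*}
    (U : Set (EuclideanSpace ℝ (Fin n)))
    (θf : J → EuclideanSpace ℝ (Fin n) → ℝ)
    (p : J → EuclideanSpace ℝ (Fin n) →L[ℝ] EuclideanSpace ℝ (Fin n))
    (C₀ δ ν : ℝ) (hC₀ : 0 < C₀) (hδ : 0 < δ) (hν : 0 ≤ ν) (K : ℕ)
    (hθ01 : ∀ j x, 0 ≤ θf j x ∧ θf j x ≤ 1)
    (hθlip : ∀ j, LipschitzWith (Real.toNNReal (C₀ / δ)) (θf j))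
    (hcard : ∀ x ∈ U, ∃ s : Finset J, s.card ≤ K ∧ ∀ j, θf j x ≠ 0 → j ∈ s)
    (hsum : ∀ x ∈ U, ∑ᶠ j, θf j x = 1)
    (hclose : ∀ i j : J,
      (Function.support (θf i) ∩ Function.support (θf j) ∩ U).Nonempty → ‖p i - p j‖ ≤ ν) :
    (∀ x ∈ U, ∀ j₀ : J, θf j₀ x ≠ 0 → ‖(∑ᶠ j, θf j x • p j) - p j₀‖ ≤ ν) ∧
    (∀ y ∈ U, ∀ z ∈ U, ∀ s : Finset J, s.card ≤ 2 * K →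
      (∀ j, (θf j y ≠ 0 ∨ θf j z ≠ 0) → j ∈ s) →
      (∀ i ∈ s, ∀ k ∈ s, ‖p i - p k‖ ≤ ν) →
      ‖(∑ᶠ j, θf j y • p j) - (∑ᶠ j, θf j z • p j)‖ ≤ 2 * K * C₀ * ν * ‖y - z‖ / δ) := by
  constructor
  · intro x hx j₀ hj₀
    obtain ⟨s, hsK, hs⟩ := hcard x hx
    have hfin : (∑ᶠ j, θf j x • p j) = ∑ j ∈ s, θf j x • p j :=
      finsum_eq_sum_of_active (fun j => θf j x) (fun j => θf j x • p j) (fun j h => by show θf j x • p j = 0; rw [show θf j x = 0 from h]; exact zero_smul ℝ (p j)) s hs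
    have hfin2 : (∑ᶠ j, θf j x) = ∑ j ∈ s, θf j x :=
      finsum_eq_sum_of_active (fun j => θf j x) _ (fun j h => h) s hs
    have h1 : (∑ j ∈ s, θf j x) = 1 := by rw [← hfin2]; exact hsum x hx
    have key : (∑ᶠ j, θf j x • p j) - p j₀ = ∑ j ∈ s, θf j x • (p j - p j₀) := by
      rw [hfin]
      simp only [smul_sub, Finset.sum_sub_distrib, ← Finset.sum_smul, h1, one_smul]
    rw [key]
    calc ‖∑ j ∈ s, θf j x • (p j - p j₀)‖ ≤ ∑ j ∈ s, ‖θf j x • (p j - p j₀)‖ :=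
          norm_sum_le _ _
      _ ≤ ∑ j ∈ s, θf j x * ν := by
          apply Finset.sum_le_sum
          intro j hj
          rw [norm_smul (θf j x) (p j - p j₀), Real.norm_eq_abs, abs_of_nonneg (hθ01 j x).1]
          by_cases h : θf j x = 0
          · rw [h, zero_mul, zero_mul]
          · exact mul_le_mul_of_nonneg_left
              (hclose j j₀ ⟨x, ⟨h, hj₀⟩, hx⟩) (hθ01 j x).1
      _ = ν := by rw [← Finset.sum_mul, h1, one_mul]
  · intro y hy z hz s hsK hs hpc
    have hfy : (∑ᶠ j, θf j y • p j) = ∑ j ∈ s, θf j y • p j :=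
      finsum_eq_sum_of_active (fun j => θf j y) (fun j => θf j y • p j) (fun j h => by show θf j y • p j = 0; rw [show θf j y = 0 from h]; exact zero_smul ℝ (p j)) s
        (fun j h => hs j (Or.inl h))
    have hfz : (∑ᶠ j, θf j z • p j) = ∑ j ∈ s, θf j z • p j :=
      finsum_eq_sum_of_active (fun j => θf j z) (fun j => θf j z • p j) (fun j h => by show θf j z • p j = 0; rw [show θf j z = 0 from h]; exact zero_smul ℝ (p j)) s
        (fun j h => hs j (Or.inr h))
    have h1y : (∑ j ∈ s, θf j y) = 1 := by
      rw [← finsum_eq_sum_of_active (fun j => θf j y) _ (fun j h => h) s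
        (fun j h => hs j (Or.inl h))]
      exact hsum y hy
    have h1z : (∑ j ∈ s, θf j z) = 1 := by
      rw [← finsum_eq_sum_of_active (fun j => θf j z) _ (fun j h => h) s
        (fun j h => hs j (Or.inr h))]
      exact hsum z hz
    -- find an active index
    have hne : ∃ j₀, θf j₀ y ≠ 0 := by
      by_contra h
      push_neg at h
      have := h1y
      rw [Finset.sum_eq_zero (fun j _ => h j)] at this
      norm_num at this
    obtain ⟨j₀, hj₀⟩ := hne
    have hj₀s : j₀ ∈ s := hs j₀ (Or.inl hj₀)
    have key : (∑ᶠ j, θf j y • p j) - (∑ᶠ j, θf j z • p j)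
        = ∑ j ∈ s, (θf j y - θf j z) • (p j - p j₀) := by
      rw [hfy, hfz]
      simp only [smul_sub, sub_smul, Finset.sum_sub_distrib, ← Finset.sum_smul,
        h1y, h1z, one_smul]
      abel
    rw [key]
    have hlip : ∀ j, |θf j y - θf j z| ≤ C₀ / δ * ‖y - z‖ := by
      intro j
      have := (hθlip j).dist_le_mul y z
      rw [Real.dist_eq] at this
      calc |θf j y - θf j z| ≤ (Real.toNNReal (C₀ / δ) : ℝ) * dist y z := this
        _ = C₀ / δ * ‖y - z‖ := by
            rw [Real.coe_toNNReal _ (le_of_lt (div_pos hC₀ hδ)), dist_eq_norm]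
    calc ‖∑ j ∈ s, (θf j y - θf j z) • (p j - p j₀)‖
        ≤ ∑ j ∈ s, ‖(θf j y - θf j z) • (p j - p j₀)‖ := norm_sum_le _ _
      _ ≤ ∑ j ∈ s, (C₀ / δ * ‖y - z‖) * ν := by
          apply Finset.sum_le_sum
          intro j hj
          rw [norm_smul (θf j y - θf j z) (p j - p j₀), Real.norm_eq_abs]
          exact mul_le_mul (hlip j) (hpc j hj j₀ hj₀s) (norm_nonneg _)
            (mul_nonneg (le_of_lt (div_pos hC₀ hδ)) (norm_nonneg _))
      _ = s.card * ((C₀ / δ * ‖y - z‖) * ν) := by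
          rw [Finset.sum_const, nsmul_eq_mul]
      _ ≤ (2 * K : ℝ) * ((C₀ / δ * ‖y - z‖) * ν) := by
          apply mul_le_mul_of_nonneg_right
          · exact_mod_cast Nat.cast_le.mpr hsK |>.trans_eq (by push_cast; ring)
          · positivity
      _ = 2 * K * C₀ * ν * ‖y - z‖ / δ := by ring
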